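/- Let A be a Noetherian local ring of Krull dimension one with no embedded primes (Serre's condition S₁) whose residue field has characteristic zero. Let I be the nilradical of A, let K be the total quotient ring of A, and let IK denote the A-submodule of K generated by I. Then K/IK is the total quotient ring of the reduced ring A_red = A/I, and there is an exact sequence of abelian groups 0 → IK/I → Cart A → Cart A_red → 0: that is, the map Kˣ/Aˣ → (K/IK)ˣ/(A_red)ˣ induced by the quotient K → K/IK is surjective, and its kernel is isomorphic as a group to the additive group IK/I. -/

import Mathlib

set_option maxHeartbeats 1000000
set_option synthInstance.maxHeartbeats 1000000

/-- For a ring homomorphism `f : R → S`, the quotient of the unit group `Sˣ` by the image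
of the unit group of `R`. -/
def UnitsQuot {R S : Type*} [CommRing R] [CommRing S] (f : R →+* S) : Type _ :=
  Sˣ ⧸ (Units.map f.toMonoidHom : Rˣ →* Sˣ).range

noncomputable instance UnitsQuot.instCommGroup {R S : Type*} [CommRing R] [CommRing S]
    (f : R →+* S) : CommGroup (UnitsQuot f) :=
  QuotientGroup.Quotient.commGroup _

/-- The class of a unit of `S` in `UnitsQuot f`. -/
def UnitsQuot.mk {R S : Type*} [CommRing R] [CommRing S] (f : R →+* S) (u : Sˣ) :
    UnitsQuot f :=
  QuotientGroup.mk u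




open Finset in
private lemma triangle_sum {M : Type*} [AddCommMonoid M] (g : ℕ → ℕ → M) (a b : ℕ)
    (h0x : ∀ i j, a ≤ i → g i j = 0) (h0y : ∀ i j, b ≤ j → g i j = 0) :
    ∑ k ∈ range (a + b), ∑ i ∈ range (k + 1), g i (k - i)
      = ∑ i ∈ range a, ∑ j ∈ range b, g i j := by
  rw [Finset.sum_sigma' (range (a+b)) (fun k => range (k+1)) (fun k i => g i (k - i))]
  rw [← Finset.sum_product' (range a) (range b) (fun i j => g i j)]
  rw [← Finset.sum_filter_of_ne (p := fun p : Σ _ : ℕ, ℕ => p.2 < a ∧ p.1 - p.2 < b)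
    (by rintro ⟨k, i⟩ _ hne
        constructor
        · by_contra h; exact hne (h0x _ _ (le_of_not_gt h))
        · by_contra h; exact hne (h0y _ _ (le_of_not_gt h)))]
  refine Finset.sum_bij' (i := fun (p : Σ _ : ℕ, ℕ) (_ : p ∈ ((range (a+b)).sigma fun k => range (k+1)).filter
        (fun p : Σ _ : ℕ, ℕ => p.2 < a ∧ p.1 - p.2 < b)) => ((p.2, p.1 - p.2) : ℕ × ℕ))
    (j := fun (q : ℕ × ℕ) (_ : q ∈ range a ×ˢ range b) => (⟨q.1 + q.2, q.1⟩ : Σ _ : ℕ, ℕ)) ?_ ?_ ?_ ?_ ?_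
  · rintro ⟨k, i⟩ hp
    simp only [Finset.mem_filter, Finset.mem_sigma, Finset.mem_range, Finset.mem_product] at hp ⊢
    exact ⟨hp.2.1, hp.2.2⟩
  · rintro ⟨i, j⟩ hq
    simp only [Finset.mem_product, Finset.mem_range] at hq
    simp only [Finset.mem_filter, Finset.mem_sigma, Finset.mem_range]
    refine ⟨⟨by omega, by omega⟩, by omega, by omega⟩
  · rintro ⟨k, i⟩ hp
    simp only [Finset.mem_filter, Finset.mem_sigma, Finset.mem_range] at hp
    have : i ≤ k := by omega
    simp [Nat.add_sub_cancel' this]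
  · rintro ⟨i, j⟩ hq; simp
  · rintro ⟨k, i⟩ hp; rfl

section Nexp

variable {R : Type*} [CommRing R] (ρ : ℚ →+* R)

/-- Truncated exponential. -/
noncomputable def nexp (n : ℕ) (x : R) : R :=
  ∑ i ∈ Finset.range n, ρ ((i.factorial : ℚ)⁻¹) * x ^ i

lemma nexp_zero_arg {n : ℕ} (hn : 1 ≤ n) : nexp ρ n (0 : R) = 1 := by
  rw [nexp, Finset.sum_eq_single 0]
  · simp
  · intro i _ hi
    simp [zero_pow hi]
  · intro h; exact absurd (Finset.mem_range.mpr hn) h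

lemma nexp_trunc {m n : ℕ} {x : R} (hx : x ^ m = 0) (hmn : m ≤ n) :
    nexp ρ n x = nexp ρ m x := by
  refine (Finset.sum_subset (Finset.range_subset_range.mpr hmn) ?_).symm
  intro i _ hi
  rw [Finset.mem_range, not_lt] at hi
  have : x ^ i = 0 := by
    calc x ^ i = x ^ m * x ^ (i - m) := by rw [← pow_add, Nat.add_sub_cancel' hi]
    _ = 0 := by rw [hx, zero_mul]
  rw [this, mul_zero]

private lemma choose_coeff_aux {i k : ℕ} (h : i ≤ k) :
    ((k.factorial : ℚ))⁻¹ * (k.choose i : ℚ)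
      = (i.factorial : ℚ)⁻¹ * ((k - i).factorial : ℚ)⁻¹ := by
  have key : (k.choose i : ℚ) * i.factorial * (k - i).factorial = k.factorial := by
    exact_mod_cast congrArg (Nat.cast : ℕ → ℚ) (Nat.choose_mul_factorial_mul_factorial h)
  have h1 : (i.factorial : ℚ) ≠ 0 := Nat.cast_ne_zero.mpr i.factorial_ne_zero
  have h2 : ((k - i).factorial : ℚ) ≠ 0 := Nat.cast_ne_zero.mpr (k - i).factorial_ne_zero
  have h3 : (k.factorial : ℚ) ≠ 0 := Nat.cast_ne_zero.mpr k.factorial_ne_zero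
  field_simp
  linear_combination key

lemma nexp_add {a b : ℕ} {x y : R} (hx : x ^ a = 0) (hy : y ^ b = 0) :
    nexp ρ (a + b) (x + y) = nexp ρ (a + b) x * nexp ρ (a + b) y := by
  have hxi : ∀ i : ℕ, a ≤ i → x ^ i = 0 := fun i hi => by
    calc x ^ i = x ^ a * x ^ (i - a) := by rw [← pow_add, Nat.add_sub_cancel' hi]
    _ = 0 := by rw [hx, zero_mul]
  have hyj : ∀ j : ℕ, b ≤ j → y ^ j = 0 := fun j hj => by
    calc y ^ j = y ^ b * y ^ (j - b) := by rw [← pow_add, Nat.add_sub_cancel' hj]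
    _ = 0 := by rw [hy, zero_mul]
  set g : ℕ → ℕ → R := fun i j => (ρ ((i.factorial : ℚ)⁻¹) * x ^ i) * (ρ ((j.factorial : ℚ)⁻¹) * y ^ j) with hg
  have h0x : ∀ i j, a ≤ i → g i j = 0 := fun i j hi => by simp [hg, hxi i hi]
  have h0y : ∀ i j, b ≤ j → g i j = 0 := fun i j hj => by simp [hg, hyj j hj]
  have LHS : nexp ρ (a + b) (x + y) = ∑ i ∈ Finset.range a, ∑ j ∈ Finset.range b, g i j := by
    rw [nexp]
    have : ∀ k ∈ Finset.range (a + b),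
        ρ ((k.factorial : ℚ)⁻¹) * (x + y) ^ k = ∑ i ∈ Finset.range (k + 1), g i (k - i) := by
      intro k _
      rw [add_pow, Finset.mul_sum]
      refine Finset.sum_congr rfl ?_
      intro i hi
      rw [Finset.mem_range] at hi
      have hik : i ≤ k := Nat.lt_succ_iff.mp hi
      have : ρ ((k.factorial : ℚ)⁻¹) * (k.choose i : R)
          = ρ ((i.factorial : ℚ)⁻¹) * ρ (((k - i).factorial : ℚ)⁻¹) := by
        rw [← map_natCast ρ (k.choose i), ← map_mul, ← map_mul, choose_coeff_aux hik]
      calc ρ ((k.factorial : ℚ)⁻¹) * (x ^ i * y ^ (k - i) * (k.choose i : R))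
          = (ρ ((k.factorial : ℚ)⁻¹) * (k.choose i : R)) * (x ^ i * y ^ (k - i)) := by ring
        _ = (ρ ((i.factorial : ℚ)⁻¹) * ρ (((k - i).factorial : ℚ)⁻¹)) * (x ^ i * y ^ (k - i)) := by rw [this]
        _ = g i (k - i) := by rw [hg]; ring
    rw [Finset.sum_congr rfl this]
    exact triangle_sum g a b h0x h0y
  have RHS : nexp ρ (a + b) x * nexp ρ (a + b) y
      = ∑ i ∈ Finset.range a, ∑ j ∈ Finset.range b, g i j := by
    rw [nexp, nexp, Finset.sum_mul_sum]
    rw [← Finset.sum_subset (Finset.range_subset_range.mpr (Nat.le_add_right a b))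
      (fun i _ hi => by
        rw [Finset.mem_range, not_lt] at hi
        exact Finset.sum_eq_zero fun j _ => h0x i j hi)]
    refine Finset.sum_congr rfl fun i _ => ?_
    exact (Finset.sum_subset (Finset.range_subset_range.mpr (Nat.le_add_left b a))
      (fun j _ hj => by
        rw [Finset.mem_range, not_lt] at hj
        exact h0y i j hj)).symm
  rw [LHS, RHS]

lemma nexp_add' {n : ℕ} {x y : R} (hx : x ^ n = 0) (hy : y ^ n = 0) (hxy : (x + y) ^ n = 0) :
    nexp ρ n (x + y) = nexp ρ n x * nexp ρ n y := by
  rw [← nexp_trunc ρ hxy (Nat.le_add_right n n), nexp_add ρ hx hy,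
    nexp_trunc ρ hx (Nat.le_add_right n n), nexp_trunc ρ hy (Nat.le_add_right n n)]

lemma nexp_mul_nexp_neg {n : ℕ} (hn : 1 ≤ n) {x : R} (hx : x ^ n = 0) :
    nexp ρ n x * nexp ρ n (-x) = 1 := by
  have hnx : (-x) ^ n = 0 := by
    rw [neg_pow, hx, mul_zero]
  have h0 : (x + -x) ^ n = 0 := by
    rw [add_neg_cancel, zero_pow (by omega)]
  rw [← nexp_add' ρ hx hnx h0, add_neg_cancel, nexp_zero_arg ρ hn]

lemma nexp_expand (m : ℕ) (x : R) :
    nexp ρ (m + 2) x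
      = 1 + x + x ^ 2 * ∑ i ∈ Finset.range m, ρ (((i + 2).factorial : ℚ)⁻¹) * x ^ i := by
  rw [nexp, Finset.sum_range_succ', Finset.sum_range_succ']
  simp only [pow_zero, mul_one, Nat.factorial_zero, Nat.factorial_one, Nat.cast_one, inv_one,
    map_one, pow_one]
  rw [Finset.mul_sum]
  have : ∀ i ∈ Finset.range m,
      ρ (((i + 1 + 1).factorial : ℚ)⁻¹) * x ^ (i + 1 + 1)
        = x ^ 2 * (ρ (((i + 2).factorial : ℚ)⁻¹) * x ^ i) := by
    intro i _
    have : (i + 1 + 1) = i + 2 := by omega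
    rw [this, pow_add]
    ring
  rw [Finset.sum_congr rfl this]
  norm_num [Nat.factorial]
  ring

lemma nexp_sub_one_sq (m : ℕ) {x : R} :
    ∃ c : R, nexp ρ (m + 2) x = 1 + x + x ^ 2 * c :=
  ⟨_, nexp_expand ρ m x⟩

lemma nexp_map {R' : Type*} [CommRing R'] (f : R →+* R') (n : ℕ) (x : R) :
    f (nexp ρ n x) = nexp (f.comp ρ) n (f x) := by
  rw [nexp, nexp, map_sum]
  refine Finset.sum_congr rfl fun i _ => ?_
  rw [map_mul, map_pow]
  rfl

end Nexp

section ExpSurj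

variable {R : Type*} [CommRing R] (ρ : ℚ →+* R) (N : Ideal R) {m : ℕ} (hNm : N ^ m = ⊥)
include hNm

private lemma pow_vanish {z : R} (hz : z ∈ N) : z ^ (m + 2) = 0 := by
  have h1 : z ^ m ∈ N ^ m := Ideal.pow_mem_pow hz m
  rw [hNm, Ideal.mem_bot] at h1
  rw [pow_add, h1, zero_mul]

private lemma claimC {j : R} (hj : j ∈ N) :
    ∃ c : R, (1 + j) * nexp ρ (m + 2) (-j) = 1 + j ^ 2 * c := by
  obtain ⟨c, hc⟩ := nexp_sub_one_sq ρ m (x := -j)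
  exact ⟨c - 1 + j * c, by rw [hc]; ring⟩

private lemma nexp_surj_aux :
    ∀ d k : ℕ, 1 ≤ k → m ≤ k + d → ∀ j ∈ N ^ k, ∃ x ∈ N, nexp ρ (m + 2) x = 1 + j := by
  intro d
  induction d with
  | zero =>
    intro k hk hmk j hj
    have hj0 : j = 0 := by
      have hle : N ^ k ≤ N ^ m := Ideal.pow_le_pow_right (by omega)
      have := hle hj
      rwa [hNm, Ideal.mem_bot] at this
    exact ⟨0, N.zero_mem, by rw [hj0, nexp_zero_arg ρ (by omega), add_zero]⟩
  | succ d ih =>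
    intro k hk hmk j hj
    have hjN : j ∈ N := Ideal.pow_le_self (by omega) hj
    obtain ⟨c, hc⟩ := claimC ρ N hNm hjN
    have hj2 : j ^ 2 * c ∈ N ^ (k + 1) := by
      have h2 : j ^ 2 ∈ N ^ (k + k) := by
        rw [pow_add]
        rw [sq]
        exact Ideal.mul_mem_mul hj hj
      have hle : N ^ (k + k) ≤ N ^ (k + 1) := Ideal.pow_le_pow_right (by omega)
      exact Ideal.mul_mem_right c _ (hle h2)
    obtain ⟨y, hyN, hy⟩ := ih (k + 1) (by omega) (by omega) _ hj2
    refine ⟨y + j, N.add_mem hyN hjN, ?_⟩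
    have hyM : y ^ (m + 2) = 0 := pow_vanish N hNm hyN
    have hjM : j ^ (m + 2) = 0 := pow_vanish N hNm hjN
    have hyjM : (y + j) ^ (m + 2) = 0 := pow_vanish N hNm (N.add_mem hyN hjN)
    rw [nexp_add' ρ hyM hjM hyjM, hy, ← hc]
    have h1 : nexp ρ (m + 2) j * nexp ρ (m + 2) (-j) = 1 :=
      nexp_mul_nexp_neg ρ (by omega) hjM
    calc (1 + j) * nexp ρ (m + 2) (-j) * nexp ρ (m + 2) j
        = (1 + j) * (nexp ρ (m + 2) j * nexp ρ (m + 2) (-j)) := by ring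
      _ = 1 + j := by rw [h1, mul_one]

lemma nexp_surj {u : R} (hu : u - 1 ∈ N) : ∃ x ∈ N, nexp ρ (m + 2) x = u := by
  obtain ⟨x, hx, hx2⟩ := nexp_surj_aux ρ N hNm m 1 le_rfl (by omega) (u - 1)
    (by rwa [pow_one])
  exact ⟨x, hx, by rw [hx2]; ring⟩

lemma nexp_eq_one (x : R) (hx : x ∈ N) (h : nexp ρ (m + 2) x = 1) : x = 0 := by
  obtain ⟨c, hc⟩ := nexp_sub_one_sq ρ m (x := x)
  have h2 : x * (1 + x * c) = 0 := by
    have : x + x ^ 2 * c = 0 := by rw [hc] at h; linear_combination h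
    linear_combination this
  have hu : IsUnit (1 + x * c) := by
    have : IsNilpotent (x * c) := ⟨m + 2, pow_vanish N hNm (Ideal.mul_mem_right c N hx)⟩
    exact IsNilpotent.isUnit_one_add this
  exact (IsUnit.mul_left_eq_zero hu).mp h2

lemma nexp_inj {x y : R} (hx : x ∈ N) (hy : y ∈ N)
    (h : nexp ρ (m + 2) x = nexp ρ (m + 2) y) : x = y := by
  have hxM : x ^ (m + 2) = 0 := pow_vanish N hNm hx
  have hyM : (-y) ^ (m + 2) = 0 := pow_vanish N hNm (N.neg_mem hy)
  have hxyM : (x + -y) ^ (m + 2) = 0 := pow_vanish N hNm (N.add_mem hx (N.neg_mem hy))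
  have h1 : nexp ρ (m + 2) (x + -y) = 1 := by
    rw [nexp_add' ρ hxM hyM hxyM, h, nexp_mul_nexp_neg ρ (by omega) (pow_vanish N hNm hy)]
  have h0 := nexp_eq_one ρ N hNm (x + -y) (N.add_mem hx (N.neg_mem hy)) h1
  rw [← sub_eq_zero, sub_eq_add_neg]
  exact h0
end ExpSurj


section CommAlg

variable {A : Type*} [CommRing A]

private lemma zd_aux {x c : A} (hc : c ≠ 0) :
    ∀ n : ℕ, c * x ^ n = 0 → ∃ y : A, y ≠ 0 ∧ x * y = 0 := by
  intro n
  induction n with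
  | zero => intro h; rw [pow_zero, mul_one] at h; exact absurd h hc
  | succ n ih =>
    intro h
    by_cases h' : c * x ^ n = 0
    · exact ih h'
    · exact ⟨c * x ^ n, h', by rw [← h]; ring⟩

private lemma zd_of_mem_minimalPrimes {p : Ideal A} (hp : p ∈ minimalPrimes A) {x : A}
    (hx : x ∈ p) : ∃ y : A, y ≠ 0 ∧ x * y = 0 := by
  haveI : p.IsPrime := hp.1.1
  have hnil : IsNilpotent (algebraMap A (Localization p.primeCompl) x) := by
    haveI : Ring.KrullDimLE 0 (Localization.AtPrime p) := .of_isLocalization _ hp _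
    rw [Ring.KrullDimLE.isNilpotent_iff_mem_maximalIdeal]
    exact (IsLocalization.AtPrime.to_map_mem_maximal_iff _ p x).mpr hx
  obtain ⟨n, hn⟩ := hnil
  rw [← map_pow, ← map_zero (algebraMap A (Localization p.primeCompl)),
    IsLocalization.eq_iff_exists p.primeCompl] at hn
  obtain ⟨c, hc⟩ := hn
  rw [mul_zero] at hc
  have hc0 : (c : A) ≠ 0 := by
    intro h
    exact c.2 (by rw [h]; exact p.zero_mem)
  exact zd_aux hc0 n hc

private lemma mk_mem_nonZeroDivisors_of_mem {s : A} (hs : s ∈ nonZeroDivisors A) :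
    Ideal.Quotient.mk (nilradical A) s ∈ nonZeroDivisors (A ⧸ nilradical A) := by
  rw [mem_nonZeroDivisors_iff_right]
  intro a ha
  obtain ⟨b, rfl⟩ := Ideal.Quotient.mk_surjective a
  rw [← map_mul, Ideal.Quotient.eq_zero_iff_mem] at ha
  obtain ⟨n, hn⟩ := ha
  rw [Ideal.Quotient.eq_zero_iff_mem]
  refine ⟨n, ?_⟩
  have h2 : b ^ n * s ^ n = 0 := by rw [← mul_pow]; exact hn
  exact mem_nonZeroDivisors_iff_right.mp (pow_mem hs n) _ h2

private lemma mem_nonZeroDivisors_of_mk [IsNoetherianRing A]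
    (hS1 : ∀ p ∈ associatedPrimes A A, p ∈ minimalPrimes A)
    {s : A} (hs : Ideal.Quotient.mk (nilradical A) s ∈ nonZeroDivisors (A ⧸ nilradical A)) :
    s ∈ nonZeroDivisors A := by
  by_contra h
  obtain ⟨a, ha0, has⟩ : ∃ a : A, a ≠ 0 ∧ a * s = 0 := by
    by_contra h'
    push_neg at h'
    exact h (mem_nonZeroDivisors_iff_right.mpr fun z hz => by
      by_contra hz0
      exact (h' z hz0) hz)
  have hzd : s ∈ ⋃ p ∈ associatedPrimes A A, (p : Set A) := by
    rw [biUnion_associatedPrimes_eq_zero_divisors]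
    exact ⟨a, ha0, by rw [smul_eq_mul, mul_comm]; exact has⟩
  simp only [Set.mem_iUnion, SetLike.mem_coe, exists_prop] at hzd
  obtain ⟨p, hp, hsp⟩ := hzd
  have hpmin : p ∈ (nilradical A).minimalPrimes := by
    have : (nilradical A) = (⊥ : Ideal A).radical := by
      rw [nilradical]; rfl
    rw [this, Ideal.radical_minimalPrimes]
    exact hS1 p hp
  rw [Ideal.minimalPrimes_eq_comap] at hpmin
  obtain ⟨q, hq, rfl⟩ := hpmin
  obtain ⟨y, hy0, hxy⟩ := zd_of_mem_minimalPrimes hq hsp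
  exact hy0 (mem_nonZeroDivisors_iff_right.mp hs y (by rw [mul_comm]; exact hxy))

end CommAlg

section Rho

variable (A : Type*) [CommRing A] [IsLocalRing A] [CharZero (IsLocalRing.ResidueField A)]

private lemma isUnit_int_cast {n : ℤ} (hn : n ≠ 0) : IsUnit ((n : A)) := by
  by_contra h
  have hm : (n : A) ∈ IsLocalRing.maximalIdeal A := h
  have : ((n : A) : A) ≠ 0 → True := fun _ => trivial
  have hres : (IsLocalRing.residue A) ((n : A)) = 0 := Ideal.Quotient.eq_zero_iff_mem.mpr hm
  rw [map_intCast] at hres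
  exact hn (by exact_mod_cast hres)

/-- A ring hom `ℚ →+* A` for a local ring with residue characteristic zero. -/
noncomputable def ratHom : ℚ →+* A :=
  IsLocalization.lift (M := nonZeroDivisors ℤ) (g := Int.castRingHom A)
    (fun s => isUnit_int_cast A (nonZeroDivisors.ne_zero s.2))

end Rho

section P1
variable (A : Type*) [CommRing A] [IsNoetherianRing A]

private lemma part1_iso (hS1 : ∀ p ∈ associatedPrimes A A, p ∈ minimalPrimes A) :
    ∃ e : (FractionRing A ⧸ Ideal.map (algebraMap A (FractionRing A)) (nilradical A))
        ≃+* FractionRing (A ⧸ nilradical A),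
      ∀ a : A,
        e (Ideal.Quotient.mk (Ideal.map (algebraMap A (FractionRing A)) (nilradical A))
            (algebraMap A (FractionRing A) a))
          = algebraMap (A ⧸ nilradical A) (FractionRing (A ⧸ nilradical A))
              (Ideal.Quotient.mk (nilradical A) a) := by
  set I := nilradical A with hI
  set K := FractionRing A with hK
  set J := Ideal.map (algebraMap A K) I with hJ
  set Ared := A ⧸ I with hAred
  set F := FractionRing Ared with hF
  set ψ : A →+* F := (algebraMap Ared F).comp (Ideal.Quotient.mk I) with hψdef
  have hψ : ∀ s : nonZeroDivisors A, IsUnit (ψ s) := by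
    rintro ⟨s, hs⟩
    exact IsLocalization.map_units F ⟨Ideal.Quotient.mk I s, mk_mem_nonZeroDivisors_of_mem hs⟩
  set g : K →+* F := IsLocalization.lift (M := nonZeroDivisors A) hψ with hgdef
  have hg : ∀ a : A, g (algebraMap A K a) = ψ a := fun a =>
    IsLocalization.lift_eq hψ a
  have hgJ : ∀ x ∈ J, g x = 0 := by
    intro x hx
    rw [hJ] at hx
    have hle : I.map (algebraMap A K) ≤ Ideal.comap g (⊥ : Ideal F) := by
      rw [Ideal.map_le_iff_le_comap]
      intro i hi
      simp only [Ideal.mem_comap, Ideal.mem_bot, Ideal.mem_comap]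
      rw [hg, hψdef, RingHom.comp_apply, Ideal.Quotient.eq_zero_iff_mem.mpr hi, map_zero]
    simpa using hle hx
  set gbar : K ⧸ J →+* F := Ideal.Quotient.lift J g hgJ with hgbar
  set qbar : Ared →+* K ⧸ J :=
    Ideal.quotientMap J (algebraMap A K) Ideal.le_comap_map with hqbar
  have hqbar_mk : ∀ a : A, qbar (Ideal.Quotient.mk I a)
      = Ideal.Quotient.mk J (algebraMap A K a) := fun a => rfl
  have hq : ∀ t : nonZeroDivisors Ared, IsUnit (qbar t) := by
    rintro ⟨t, ht⟩
    obtain ⟨s, rfl⟩ := Ideal.Quotient.mk_surjective t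
    have hs : s ∈ nonZeroDivisors A := mem_nonZeroDivisors_of_mk hS1 ht
    have : IsUnit (algebraMap A K s) := IsLocalization.map_units K ⟨s, hs⟩
    rw [hqbar_mk]
    exact this.map (Ideal.Quotient.mk J)
  set h : F →+* K ⧸ J := IsLocalization.lift (M := nonZeroDivisors Ared) hq with hhdef
  have hh : ∀ t : Ared, h (algebraMap Ared F t) = qbar t := fun t =>
    IsLocalization.lift_eq hq t
  have comp1 : gbar.comp h = RingHom.id F := by
    apply IsLocalization.ringHom_ext (nonZeroDivisors Ared)
    ext a
    simp only [RingHom.comp_apply, RingHom.id_apply]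
    rw [hh, hqbar_mk, hgbar]
    rw [Ideal.Quotient.lift_mk, hg]
    rfl
  have comp2 : h.comp gbar = RingHom.id (K ⧸ J) := by
    apply Ideal.Quotient.ringHom_ext
    apply IsLocalization.ringHom_ext (nonZeroDivisors A)
    ext a
    simp only [RingHom.comp_apply, RingHom.id_apply]
    rw [hgbar, Ideal.Quotient.lift_mk, hg]
    have : ψ a = algebraMap Ared F (Ideal.Quotient.mk I a) := rfl
    rw [this, hh, hqbar_mk]
  refine ⟨RingEquiv.ofRingHom gbar h ?_ ?_, ?_⟩
  · exact comp1
  · exact comp2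
  · intro a
    show gbar (Ideal.Quotient.mk J (algebraMap A K a)) = _
    rw [hgbar, Ideal.Quotient.lift_mk, hg]
    rfl
end P1

section P2
variable (A : Type*) [CommRing A] [IsLocalRing A] [IsNoetherianRing A]
    [CharZero (IsLocalRing.ResidueField A)]

private lemma mem_nilradical_of_algebraMap_mem {a : A}
    (h : algebraMap A (FractionRing A) a
      ∈ (nilradical A).map (algebraMap A (FractionRing A))) :
    a ∈ nilradical A := by
  rw [IsLocalization.mem_map_algebraMap_iff (nonZeroDivisors A)] at h
  obtain ⟨⟨i, s⟩, hi⟩ := h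
  rw [← map_mul, IsFractionRing.coe_inj] at hi
  have hnil : IsNilpotent ((i : A)) := i.2
  obtain ⟨n, hn⟩ := hnil
  refine ⟨n, ?_⟩
  have h2 : a ^ n * (s : A) ^ n = 0 := by
    rw [← mul_pow, hi, hn]
  exact mem_nonZeroDivisors_iff_right.mp (pow_mem s.2 n) _ h2

private lemma part2_main :
    ∃ φ : UnitsQuot (algebraMap A (FractionRing A)) →*
        UnitsQuot (Ideal.quotientMap
          (Ideal.map (algebraMap A (FractionRing A)) (nilradical A))
          (algebraMap A (FractionRing A)) Ideal.le_comap_map),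
      (∀ u : (FractionRing A)ˣ,
        φ (UnitsQuot.mk _ u)
          = UnitsQuot.mk _ (Units.map (Ideal.Quotient.mk
              (Ideal.map (algebraMap A (FractionRing A)) (nilradical A))).toMonoidHom u)) ∧
      Function.Surjective φ ∧
      Nonempty (φ.ker ≃*
        Multiplicative
          ((Ideal.map (algebraMap A (FractionRing A)) (nilradical A)).toAddSubgroup ⧸
            ((AddSubgroup.map (algebraMap A (FractionRing A)).toAddMonoidHom
                (nilradical A).toAddSubgroup).addSubgroupOf
              (Ideal.map (algebraMap A (FractionRing A)) (nilradical A)).toAddSubgroup))) := by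
  classical
  set K := FractionRing A with hK
  set I := nilradical A with hIdef
  set alg := algebraMap A K with halg
  set J : Ideal K := I.map alg with hJdef
  set mkJ := Ideal.Quotient.mk J with hmkJ
  set mkI := Ideal.Quotient.mk I with hmkI
  set qbar : (A ⧸ I) →+* (K ⧸ J) := Ideal.quotientMap J alg Ideal.le_comap_map with hqbar
  -- nilpotency
  obtain ⟨m, hm⟩ : IsNilpotent I := IsNoetherianRing.isNilpotent_nilradical A
  have hJm : J ^ m = ⊥ := by
    rw [hJdef, ← Ideal.map_pow, hm]
    exact Ideal.map_bot
  -- subgroups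
  set Rng : Subgroup Kˣ := (Units.map alg.toMonoidHom : Aˣ →* Kˣ).range with hRng
  set Rng' : Subgroup (K ⧸ J)ˣ :=
    (Units.map qbar.toMonoidHom : (A ⧸ I)ˣ →* (K ⧸ J)ˣ).range with hRng'
  have hcomm : mkJ.comp alg = qbar.comp mkI := by
    ext a; rfl
  haveI hN' : Rng'.Normal := ⟨fun n hn g => by rwa [mul_comm g n, mul_inv_cancel_right]⟩
  haveI hN : Rng.Normal := Subgroup.normal_of_comm Rng
  -- the map π
  set π : Kˣ →* UnitsQuot qbar :=
    (QuotientGroup.mk' Rng').comp (Units.map mkJ.toMonoidHom) with hπ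
  have hπRng : ∀ u ∈ Rng, π u = 1 := by
    rintro _ ⟨au, rfl⟩
    have key : Units.map mkJ.toMonoidHom (Units.map alg.toMonoidHom au)
        = Units.map qbar.toMonoidHom (Units.map mkI.toMonoidHom au) := by
      ext; rfl
    show QuotientGroup.mk' Rng' (Units.map mkJ.toMonoidHom (Units.map alg.toMonoidHom au)) = 1
    rw [key, QuotientGroup.mk'_apply, QuotientGroup.eq_one_iff]
    exact ⟨Units.map mkI.toMonoidHom au, rfl⟩
  set φ : UnitsQuot alg →* UnitsQuot qbar := QuotientGroup.lift Rng π hπRng with hφ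
  have hφmk : ∀ u : Kˣ, φ (UnitsQuot.mk alg u)
      = UnitsQuot.mk qbar (Units.map mkJ.toMonoidHom u) := fun u => rfl
  -- surjectivity
  have hsurj : Function.Surjective φ := by
    intro c
    obtain ⟨w, rfl⟩ := QuotientGroup.mk'_surjective Rng' c
    obtain ⟨x, hx⟩ := Ideal.Quotient.mk_surjective (I := J) w.val
    obtain ⟨y, hy⟩ := Ideal.Quotient.mk_surjective (I := J) w.inv
    have hxy : x * y - 1 ∈ J := by
      rw [← Ideal.Quotient.eq_zero_iff_mem, map_sub, map_mul, ← hmkJ, hx, hy, w.val_inv,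
        map_one, sub_self]
    have hux : IsUnit x := by
      have h1 : IsUnit (x * y) := by
        have : x * y = 1 + (x * y - 1) := by ring
        rw [this]
        exact IsNilpotent.isUnit_one_add ⟨m + 2, pow_vanish J hJm hxy⟩
      exact isUnit_of_mul_isUnit_left h1
    refine ⟨QuotientGroup.mk hux.unit, ?_⟩
    have : Units.map mkJ.toMonoidHom hux.unit = w := by
      ext
      rw [Units.coe_map]
      show mkJ (hux.unit : K) = w.val
      rw [hux.unit_spec]
      exact hx
    exact congrArg (QuotientGroup.mk' Rng') this
  -- kernel
  set ρ : ℚ →+* A := ratHom A with hρ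
  set ρK : ℚ →+* K := alg.comp ρ with hρK
  have hpowJ : ∀ z ∈ J, z ^ (m + 2) = 0 := fun z hz => pow_vanish J hJm hz
  have hpowI : ∀ z ∈ I, z ^ (m + 2) = 0 := fun z hz => pow_vanish I hm hz
  set Jadd := J.toAddSubgroup with hJadd
  set Isub := ((AddSubgroup.map alg.toAddMonoidHom I.toAddSubgroup).addSubgroupOf Jadd)
    with hIsub
  -- exp units
  have heU : ∀ x : Jadd, nexp ρK (m + 2) (x : K) * nexp ρK (m + 2) (-(x : K)) = 1 :=
    fun x => nexp_mul_nexp_neg ρK (by omega) (hpowJ x x.2)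
  set eU : Jadd → Kˣ := fun x => Units.mkOfMulEqOne _ _ (heU x) with heUdef
  have heUval : ∀ x : Jadd, (eU x : K) = nexp ρK (m + 2) (x : K) := fun x => rfl
  have heU_mul : ∀ x y : Jadd, eU (x + y) = eU x * eU y := by
    intro x y
    ext
    rw [Units.val_mul, heUval, heUval, heUval]
    exact nexp_add' ρK (hpowJ x x.2) (hpowJ y y.2) (hpowJ _ (J.add_mem x.2 y.2))
  have heU_one : eU 0 = 1 := by
    ext
    rw [heUval]
    exact nexp_zero_arg ρK (by omega)
  -- exp lands in the kernel
  have hker : ∀ x : Jadd, (QuotientGroup.mk (eU x) : UnitsQuot alg) ∈ φ.ker := by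
    intro x
    refine MonoidHom.mem_ker.mpr ?_
    have h1 : Units.map mkJ.toMonoidHom (eU x) = 1 := by
      ext
      rw [Units.coe_map]
      show mkJ (nexp ρK (m + 2) (x : K)) = 1
      obtain ⟨c, hc⟩ := nexp_sub_one_sq ρK m (x := (x : K))
      have : nexp ρK (m + 2) (x : K) - 1 ∈ J := by
        rw [hc]
        have : (1 : K) + x + (x : K) ^ 2 * c - 1 = (x : K) + (x : K) ^ 2 * c := by ring
        rw [this]
        exact J.add_mem x.2 (Ideal.mul_mem_right _ _ (Ideal.pow_mem_of_mem J x.2 2 (by omega)))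
      calc mkJ (nexp ρK (m + 2) (x : K))
          = mkJ (1 + (nexp ρK (m + 2) (x : K) - 1)) := by congr 1; ring
        _ = 1 := by
            rw [map_add, map_one, Ideal.Quotient.eq_zero_iff_mem.mpr this, add_zero]
    exact (congrArg (QuotientGroup.mk' Rng') h1).trans (map_one _)
  -- the additive hom
  set Θ : Jadd →+ Additive φ.ker :=
    { toFun := fun x => Additive.ofMul (⟨QuotientGroup.mk (eU x), hker x⟩ : φ.ker)
      map_zero' := by
        simp only [heU_one]
        rfl
      map_add' := by
        intro x y
        simp only [heU_mul]
        rfl } with hΘ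
  -- Θ is surjective onto the kernel of φ
  have hΘsurj : Function.Surjective Θ := by
    intro t
    obtain ⟨⟨c, hc⟩, rfl⟩ := Additive.ofMul.surjective t
    obtain ⟨u, rfl⟩ := QuotientGroup.mk'_surjective Rng c
    replace hc := MonoidHom.mem_ker.mp hc
    have hc' : QuotientGroup.mk' Rng' (Units.map mkJ.toMonoidHom u) = 1 := hc
    rw [QuotientGroup.mk'_apply, QuotientGroup.eq_one_iff] at hc'
    obtain ⟨v, hv⟩ := hc'
    obtain ⟨a, ha⟩ := Ideal.Quotient.mk_surjective (I := I) v.val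
    obtain ⟨b, hb⟩ := Ideal.Quotient.mk_surjective (I := I) v.inv
    have hab : a * b - 1 ∈ I := by
      rw [← Ideal.Quotient.eq_zero_iff_mem, map_sub, map_mul, ← hmkI, ha, hb, v.val_inv, map_one, sub_self]
    have hua : IsUnit a := by
      have h1 : IsUnit (a * b) := by
        have h2 : a * b = 1 + (a * b - 1) := by ring
        rw [h2]
        exact IsNilpotent.isUnit_one_add ⟨m + 2, pow_vanish I hm hab⟩
      exact isUnit_of_mul_isUnit_left h1
    have hva : Units.map mkI.toMonoidHom hua.unit = v := by
      ext
      rw [Units.coe_map]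
      show mkI (hua.unit : A) = v.val
      rw [hua.unit_spec]
      exact ha
    set z : Kˣ := Units.map alg.toMonoidHom hua.unit with hz
    set w : Kˣ := u * z⁻¹ with hw
    have hw1 : Units.map mkJ.toMonoidHom w = 1 := by
      have hkey : Units.map mkJ.toMonoidHom z = Units.map qbar.toMonoidHom v := by
        rw [← hva]
        ext; rfl
      rw [hw, map_mul, map_inv, hkey, ← hv, mul_inv_cancel]
    have hwJ : (w : K) - 1 ∈ J := by
      have : mkJ (w : K) = mkJ 1 := by
        rw [map_one]
        exact congrArg Units.val hw1
      rwa [Ideal.Quotient.eq] at this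
    obtain ⟨x, hxJ, hxval⟩ := nexp_surj ρK J hJm hwJ
    refine ⟨⟨x, hxJ⟩, ?_⟩
    have heUw : eU ⟨x, hxJ⟩ = w := by
      ext
      rw [heUval]
      exact hxval
    have hclass : (QuotientGroup.mk w : UnitsQuot alg) = QuotientGroup.mk u := by
      rw [QuotientGroup.eq]
      have : w⁻¹ * u = z := by
        rw [hw]
        group
      rw [this]
      exact ⟨hua.unit, rfl⟩
    show Additive.ofMul (⟨QuotientGroup.mk (eU ⟨x, hxJ⟩), hker _⟩ : φ.ker) = _
    congr 1
    apply Subtype.ext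
    show (QuotientGroup.mk (eU ⟨x, hxJ⟩) : UnitsQuot alg) = QuotientGroup.mk u
    rw [heUw]
    exact hclass
  -- the kernel of Θ
  have hΘker : Θ.ker = Isub := by
    ext x
    simp only [AddMonoidHom.mem_ker]
    constructor
    · intro h0
      have h1 : (⟨QuotientGroup.mk (eU x), hker x⟩ : φ.ker) = 1 := Additive.ofMul.injective h0
      have h2 : (QuotientGroup.mk (eU x) : UnitsQuot alg) = 1 := congrArg Subtype.val h1
      rw [QuotientGroup.eq_one_iff] at h2
      obtain ⟨au, hau⟩ := h2
      have hval : alg ((au : Aˣ) : A) = nexp ρK (m + 2) (x : K) := by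
        have := congrArg Units.val hau
        rwa [Units.coe_map] at this
      have hJmem : alg (((au : Aˣ) : A) - 1) ∈ J := by
        rw [map_sub, map_one, hval]
        obtain ⟨c, hc⟩ := nexp_sub_one_sq ρK m (x := (x : K))
        rw [hc]
        have heq : (1 : K) + x + (x : K) ^ 2 * c - 1 = (x : K) + (x : K) ^ 2 * c := by ring
        rw [heq]
        exact J.add_mem x.2 (Ideal.mul_mem_right _ _ (Ideal.pow_mem_of_mem J x.2 2 (by omega)))
      have hI1 : ((au : Aˣ) : A) - 1 ∈ I := mem_nilradical_of_algebraMap_mem A hJmem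
      obtain ⟨t, htI, ht⟩ := nexp_surj ρ I hm hI1
      have htx : alg t = (x : K) := by
        apply nexp_inj ρK J hJm (Ideal.mem_map_of_mem alg htI) x.2
        have h3 : alg (nexp ρ (m + 2) t) = nexp ρK (m + 2) (alg t) := by
          rw [nexp_map ρ alg]
        rw [← h3, ht, hval]
      refine AddSubgroup.mem_addSubgroupOf.mpr ?_
      exact ⟨t, htI, htx⟩
    · intro hx
      obtain ⟨t, htI, ht0⟩ := AddSubgroup.mem_addSubgroupOf.mp hx
      have ht : alg t = (x : K) := ht0
      have htM : t ^ (m + 2) = 0 := hpowI t htI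
      have hAU : nexp ρ (m + 2) t * nexp ρ (m + 2) (-t) = 1 :=
        nexp_mul_nexp_neg ρ (by omega) htM
      have hmap : Units.map alg.toMonoidHom (Units.mkOfMulEqOne _ _ hAU) = eU x := by
        ext
        rw [Units.coe_map]
        show alg (nexp ρ (m + 2) t) = nexp ρK (m + 2) (x : K)
        rw [nexp_map ρ alg]
        show nexp ρK (m + 2) (alg t) = nexp ρK (m + 2) (x : K)
        rw [ht]
      have h1 : (QuotientGroup.mk (eU x) : UnitsQuot alg) = 1 :=
        (QuotientGroup.eq_one_iff _).mpr ⟨Units.mkOfMulEqOne _ _ hAU, hmap⟩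
      show Additive.ofMul (⟨QuotientGroup.mk (eU x), hker x⟩ : φ.ker) = 0
      have h2 : (⟨QuotientGroup.mk (eU x), hker x⟩ : φ.ker) = 1 := Subtype.ext h1
      rw [h2]
      rfl
  -- assemble the isomorphism
  have e1 : (Jadd ⧸ Θ.ker) ≃+ Additive φ.ker :=
    QuotientAddGroup.quotientKerEquivOfSurjective Θ hΘsurj
  have e2 : (Jadd ⧸ Isub) ≃+ (Jadd ⧸ Θ.ker) :=
    QuotientAddGroup.quotientAddEquivOfEq hΘker.symm
  have e3 : (Jadd ⧸ Isub) ≃+ Additive φ.ker := e2.trans e1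
  exact ⟨φ, hφmk, hsurj, ⟨(AddEquiv.toMultiplicativeRight e3.symm)⟩⟩

end P2

/-- **Proposition 5.4.** Let `A` be a one-dimensional Noetherian local ring with no embedded
primes (Serre's condition `S₁`) whose residue field has characteristic zero.  Let `I` be the
nilradical of `A`, `K` the total quotient ring of `A`, and `IK` the ideal of `K` generated by
the image of `I`.  Then `K/IK` is the total quotient ring of `A_red = A/I`, and there is an
exact sequence `0 → IK/I → Cart A → Cart A_red → 0`: the natural map
`Cart A = Kˣ/Aˣ → (K/IK)ˣ/(A_red)ˣ = Cart A_red` is surjective with kernel isomorphic to the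
additive group `IK/I`. -/
theorem cart_nilradical_exact_sequence
    (A : Type*) [CommRing A] [IsLocalRing A] [IsNoetherianRing A]
    [CharZero (IsLocalRing.ResidueField A)]
    (hdim : ringKrullDim A = 1)
    (hS1 : ∀ p ∈ associatedPrimes A A, p ∈ minimalPrimes A) :
    -- `K/IK` is the total quotient ring of `A_red`:
    (∃ e : (FractionRing A ⧸ Ideal.map (algebraMap A (FractionRing A)) (nilradical A))
        ≃+* FractionRing (A ⧸ nilradical A),
      ∀ a : A,
        e (Ideal.Quotient.mk (Ideal.map (algebraMap A (FractionRing A)) (nilradical A))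
            (algebraMap A (FractionRing A) a))
          = algebraMap (A ⧸ nilradical A) (FractionRing (A ⧸ nilradical A))
              (Ideal.Quotient.mk (nilradical A) a)) ∧
    -- the exact sequence `0 → IK/I → Cart A → Cart A_red → 0`:
    (∃ φ : UnitsQuot (algebraMap A (FractionRing A)) →*
        UnitsQuot (Ideal.quotientMap
          (Ideal.map (algebraMap A (FractionRing A)) (nilradical A))
          (algebraMap A (FractionRing A)) Ideal.le_comap_map),
      (∀ u : (FractionRing A)ˣ,
        φ (UnitsQuot.mk _ u)
          = UnitsQuot.mk _ (Units.map (Ideal.Quotient.mk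
              (Ideal.map (algebraMap A (FractionRing A)) (nilradical A))).toMonoidHom u)) ∧
      Function.Surjective φ ∧
      Nonempty (φ.ker ≃*
        Multiplicative
          ((Ideal.map (algebraMap A (FractionRing A)) (nilradical A)).toAddSubgroup ⧸
            ((AddSubgroup.map (algebraMap A (FractionRing A)).toAddMonoidHom
                (nilradical A).toAddSubgroup).addSubgroupOf
              (Ideal.map (algebraMap A (FractionRing A)) (nilradical A)).toAddSubgroup)))) := by
  exact ⟨part1_iso A hS1, part2_main A⟩
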